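/- Let 0 < R < ∞, let 1 ≤ q < ∞, and let ω be differentiable, positive and non-increasing on [0, R²] (being continuous from the left at R²). Then for every function g analytic in 𝔻_R, D_q(R, g; ω)^q ≤ (1/2)·(ω(0) − ω(R²))·R²·M_q(R, g)^q. -/

import Mathlib

open MeasureTheory Real Set Filter Metric intervalIntegral
open scoped ENNReal NNReal

lemma integral_an_le (B : ℝ) (hB : 0 < B) (ω : ℝ → ℝ)
    (hωc : ContinuousOn ω (Set.Icc 0 B))
    (hdec : AntitoneOn ω (Set.Icc 0 B))
    (c : ℝ) (hc0 : 0 < c) (hcB : c < B) :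
    ∫ t in (0:ℝ)..B, c⁻¹ * (t * (ω t - ω (min (t + c) B))) ≤ (ω 0 - ω B) * B := by
  have hBmem : (B:ℝ) ∈ Icc (0:ℝ) B := ⟨hB.le, le_refl _⟩
  have h0mem : (0:ℝ) ∈ Icc (0:ℝ) B := ⟨le_refl _, hB.le⟩
  have hωB : ω B ≤ ω 0 := hdec h0mem hBmem hB.le
  -- continuity facts
  have hmin : ContinuousOn (fun t : ℝ => ω (min (t + c) B)) (Icc 0 B) := by
    apply hωc.comp (by fun_prop : ContinuousOn (fun t : ℝ => min (t + c) B) (Icc 0 B))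
    intro t ht
    exact ⟨le_min (by linarith [ht.1]) hB.le, min_le_right _ _⟩
  have hf1 : ContinuousOn (fun t : ℝ => t * ω t) (Icc 0 B) := continuousOn_id.mul hωc
  have hf2 : ContinuousOn (fun t : ℝ => t * ω (min (t + c) B)) (Icc 0 B) :=
    continuousOn_id.mul hmin
  have hI1 : IntervalIntegrable (fun t : ℝ => t * ω t) volume 0 B :=
    (hf1.mono (by rw [uIcc_of_le hB.le])).intervalIntegrable
  have hI2 : IntervalIntegrable (fun t : ℝ => t * ω (min (t + c) B)) volume 0 B :=
    (hf2.mono (by rw [uIcc_of_le hB.le])).intervalIntegrable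
  have hsub1 : Icc (0:ℝ) c ⊆ Icc 0 B := Icc_subset_Icc (le_refl _) hcB.le
  have hsub2 : Icc (c:ℝ) B ⊆ Icc 0 B := Icc_subset_Icc hc0.le (le_refl _)
  have hI1a : IntervalIntegrable (fun t : ℝ => t * ω t) volume 0 c :=
    ((hf1.mono hsub1).mono (by rw [uIcc_of_le hc0.le])).intervalIntegrable
  have hI1b : IntervalIntegrable (fun t : ℝ => t * ω t) volume c B :=
    ((hf1.mono hsub2).mono (by rw [uIcc_of_le hcB.le])).intervalIntegrable
  have hωI : IntervalIntegrable ω volume c B :=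
    ((hωc.mono hsub2).mono (by rw [uIcc_of_le hcB.le])).intervalIntegrable
  have hI3 : IntervalIntegrable (fun t : ℝ => (t - c) * ω t) volume c B :=
    (((continuousOn_id.sub continuousOn_const).mul (hωc.mono hsub2)).mono
      (by rw [uIcc_of_le hcB.le])).intervalIntegrable
  -- compute J = ∫₀^B t ω(min(t+c,B))
  have hJ : ∫ t in (0:ℝ)..B, t * ω (min (t + c) B)
      = (∫ t in c..B, (t - c) * ω t) + ω B * (B^2 - (B - c)^2) / 2 := by
    have hadj : (∫ t in (0:ℝ)..(B - c), t * ω (min (t + c) B))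
        + (∫ t in (B - c)..B, t * ω (min (t + c) B))
        = ∫ t in (0:ℝ)..B, t * ω (min (t + c) B) := by
      apply integral_add_adjacent_intervals
      · exact ((hf2.mono (Icc_subset_Icc (le_refl 0) (by linarith : B - c ≤ B))).mono
          (by rw [uIcc_of_le (by linarith : (0:ℝ) ≤ B - c)])).intervalIntegrable
      · exact ((hf2.mono (Icc_subset_Icc (by linarith : (0:ℝ) ≤ B - c) (le_refl B))).mono
          (by rw [uIcc_of_le (by linarith : B - c ≤ B)])).intervalIntegrable
    have h1 : (∫ t in (0:ℝ)..(B - c), t * ω (min (t + c) B))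
        = ∫ t in c..B, (t - c) * ω t := by
      rw [show (∫ t in (0:ℝ)..(B - c), t * ω (min (t + c) B))
          = ∫ t in (0:ℝ)..(B - c), (fun s => (s - c) * ω s) (t + c) from ?_]
      · rw [integral_comp_add_right (fun s => (s - c) * ω s) c]
        norm_num
      · apply integral_congr
        intro t ht
        rw [uIcc_of_le (by linarith)] at ht
        have hmin' : min (t + c) B = t + c := min_eq_left (by linarith [ht.2])
        dsimp only
        rw [hmin']
        ring
    have h2 : (∫ t in (B - c)..B, t * ω (min (t + c) B))
        = ω B * (B^2 - (B - c)^2) / 2 := by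
      have : (∫ t in (B - c)..B, t * ω (min (t + c) B))
          = ∫ t in (B - c)..B, t * ω B := by
        apply integral_congr
        intro t ht
        rw [uIcc_of_le (by linarith)] at ht
        have hmin' : min (t + c) B = B := min_eq_right (by linarith [ht.1])
        dsimp only
        rw [hmin']
      rw [this]
      rw [intervalIntegral.integral_mul_const, integral_id]
      ring
    rw [← hadj, h1, h2]
  -- split ∫₀^B t ω t
  have hsplit : (∫ t in (0:ℝ)..c, t * ω t) + (∫ t in c..B, t * ω t)
      = ∫ t in (0:ℝ)..B, t * ω t := integral_add_adjacent_intervals hI1a hI1b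
  -- the two bounds
  have hb1 : (∫ t in (0:ℝ)..c, t * ω t) ≤ ω 0 * c^2 / 2 := by
    have : (∫ t in (0:ℝ)..c, t * ω t) ≤ ∫ t in (0:ℝ)..c, t * ω 0 := by
      apply integral_mono_on hc0.le hI1a
      · exact intervalIntegrable_id.mul_const _
      · intro t ht
        have htB : t ∈ Icc (0:ℝ) B := hsub1 ht
        have := hdec h0mem htB htB.1
        nlinarith [ht.1]
    calc (∫ t in (0:ℝ)..c, t * ω t) ≤ ∫ t in (0:ℝ)..c, t * ω 0 := this
      _ = ω 0 * c^2 / 2 := by rw [intervalIntegral.integral_mul_const, integral_id]; ring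
  have hb2 : (∫ t in c..B, ω t) ≤ ω 0 * (B - c) := by
    have : (∫ t in c..B, ω t) ≤ ∫ t in c..B, ω 0 := by
      apply integral_mono_on hcB.le hωI intervalIntegrable_const
      intro t ht
      exact hdec h0mem (hsub2 ht) (hsub2 ht).1
    simpa using this.trans (by simp [mul_comm])
  -- combine difference on [c,B]
  have hdiff : (∫ t in c..B, t * ω t) - (∫ t in c..B, (t - c) * ω t)
      = c * ∫ t in c..B, ω t := by
    rw [← integral_sub hI1b hI3, ← intervalIntegral.integral_const_mul]
    apply integral_congr
    intro t _
    ring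
  -- final computation
  rw [intervalIntegral.integral_const_mul]
  have hdist : (∫ t in (0:ℝ)..B, t * (ω t - ω (min (t + c) B)))
      = (∫ t in (0:ℝ)..B, t * ω t) - ∫ t in (0:ℝ)..B, t * ω (min (t + c) B) := by
    rw [← integral_sub hI1 hI2]
    apply integral_congr
    intro t _
    ring
  rw [hdist, hJ, ← hsplit]
  rw [inv_mul_le_iff₀ hc0]
  nlinarith [hb1, hb2, hdiff, hωB, hc0, hcB]


lemma lintegral_mul_neg_deriv_le (B : ℝ) (hB : 0 < B) (ω : ℝ → ℝ)
    (hdiff : DifferentiableOn ℝ ω (Set.Icc 0 B))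
    (hdec : AntitoneOn ω (Set.Icc 0 B)) :
    ∫⁻ t in Set.Ioo (0:ℝ) B, ENNReal.ofReal t * ENNReal.ofReal (-(deriv ω t))
      ≤ ENNReal.ofReal ((ω 0 - ω B) * B) := by
  have hωc : ContinuousOn ω (Icc 0 B) := hdiff.continuousOn
  set a : ℕ → ℝ → ℝ :=
    fun n t => (1/((n:ℝ)+1))⁻¹ * (t * (ω t - ω (min (t + 1/((n:ℝ)+1)) B))) with ha
  have hc : ∀ n : ℕ, (0:ℝ) < 1/((n:ℝ)+1) := by intro n; positivity
  have hacont : ∀ n, ContinuousOn (a n) (Icc 0 B) := by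
    intro n
    apply continuousOn_const.mul
    apply continuousOn_id.mul
    apply hωc.sub
    apply hωc.comp (by fun_prop : ContinuousOn (fun t : ℝ => min (t + 1/((n:ℝ)+1)) B) (Icc 0 B))
    intro t ht
    exact ⟨le_min (by linarith [ht.1, (hc n).le]) hB.le, min_le_right _ _⟩
  have hanneg : ∀ n, ∀ t ∈ Icc (0:ℝ) B, 0 ≤ a n t := by
    intro n t ht
    have h1 : min (t + 1/((n:ℝ)+1)) B ∈ Icc (0:ℝ) B :=
      ⟨le_min (by linarith [ht.1, (hc n).le]) hB.le, min_le_right _ _⟩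
    have h2 : t ≤ min (t + 1/((n:ℝ)+1)) B := le_min (by linarith [hc n]) ht.2
    have hω' := hdec ht h1 h2
    rw [ha]
    have h3 : (0:ℝ) ≤ (1/((n:ℝ)+1))⁻¹ := by positivity
    apply mul_nonneg h3
    apply mul_nonneg ht.1
    linarith
  -- pointwise liminf bound
  have hpt : ∀ t ∈ Ioo (0:ℝ) B,
      ENNReal.ofReal t * ENNReal.ofReal (-(deriv ω t))
        ≤ liminf (fun n => ENNReal.ofReal (a n t)) atTop := by
    intro t ht
    by_cases hd : DifferentiableAt ℝ ω t
    · have hlim : Tendsto (fun n : ℕ => a n t) atTop (nhds (t * (-(deriv ω t)))) := by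
        have hslope : Tendsto (slope ω t) (nhdsWithin t {t}ᶜ) (nhds (deriv ω t)) :=
          hasDerivAt_iff_tendsto_slope.1 hd.hasDerivAt
        have hu : Tendsto (fun n : ℕ => t + 1/((n:ℝ)+1)) atTop (nhdsWithin t {t}ᶜ) := by
          rw [tendsto_nhdsWithin_iff]
          constructor
          · have : Tendsto (fun n : ℕ => 1/((n:ℝ)+1)) atTop (nhds 0) :=
              tendsto_one_div_add_atTop_nhds_zero_nat
            simpa using (tendsto_const_nhds.add this)
          · exact Eventually.of_forall (fun n => by
              simp only [Set.mem_compl_iff, Set.mem_singleton_iff]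
              exact fun h => (hc n).ne' (by linarith))
        have h1 : Tendsto (fun n : ℕ => slope ω t (t + 1/((n:ℝ)+1))) atTop (nhds (deriv ω t)) :=
          hslope.comp hu
        have h2 : Tendsto (fun n : ℕ => t * (-(slope ω t (t + 1/((n:ℝ)+1))))) atTop
            (nhds (t * (-(deriv ω t)))) := h1.neg.const_mul t
        apply h2.congr'
        have hev : ∀ᶠ n : ℕ in atTop, 1/((n:ℝ)+1) < B - t :=
          tendsto_one_div_add_atTop_nhds_zero_nat.eventually_lt_const (by linarith [ht.2])
        filter_upwards [hev] with n hn
        have hmin : min (t + 1/((n:ℝ)+1)) B = t + 1/((n:ℝ)+1) := min_eq_left (by linarith)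
        rw [ha]
        simp only [slope_def_field, hmin]
        field_simp
        ring
      have : Tendsto (fun n => ENNReal.ofReal (a n t)) atTop
          (nhds (ENNReal.ofReal (t * (-(deriv ω t))))) :=
        ENNReal.continuous_ofReal.continuousAt.tendsto.comp hlim
      rw [this.liminf_eq, ← ENNReal.ofReal_mul ht.1.le]
    · rw [deriv_zero_of_not_differentiableAt hd]
      simp
  have hmeas : ∀ n, AEMeasurable (fun t => ENNReal.ofReal (a n t))
      (volume.restrict (Ioo 0 B)) := fun n =>
    (ENNReal.continuous_ofReal.comp_continuousOn
      ((hacont n).mono Ioo_subset_Icc_self)).aemeasurable measurableSet_Ioo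
  -- per-n bound, for n large
  have hper : ∀ᶠ n : ℕ in atTop,
      (∫⁻ t in Ioo (0:ℝ) B, ENNReal.ofReal (a n t)) ≤ ENNReal.ofReal ((ω 0 - ω B) * B) := by
    have hev : ∀ᶠ n : ℕ in atTop, 1/((n:ℝ)+1) < B :=
      tendsto_one_div_add_atTop_nhds_zero_nat.eventually_lt_const hB
    filter_upwards [hev] with n hn
    have hint : IntegrableOn (a n) (Ioo 0 B) volume :=
      ((hacont n).integrableOn_Icc).mono_set Ioo_subset_Icc_self
    have hnn : 0 ≤ᶠ[ae (volume.restrict (Ioo (0:ℝ) B))] a n := by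
      filter_upwards [ae_restrict_mem measurableSet_Ioo] with t ht
      exact hanneg n t (Ioo_subset_Icc_self ht)
    rw [← ofReal_integral_eq_lintegral_ofReal hint hnn]
    apply ENNReal.ofReal_le_ofReal
    have heq : (∫ t in Ioo (0:ℝ) B, a n t) = ∫ t in (0:ℝ)..B, a n t := by
      rw [intervalIntegral.integral_of_le hB.le, ← integral_Ioc_eq_integral_Ioo]
    rw [heq]
    exact integral_an_le B hB ω hωc hdec _ (hc n) hn
  calc ∫⁻ t in Ioo (0:ℝ) B, ENNReal.ofReal t * ENNReal.ofReal (-(deriv ω t))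
      ≤ ∫⁻ t in Ioo (0:ℝ) B, liminf (fun n => ENNReal.ofReal (a n t)) atTop := by
        refine lintegral_mono_ae ?_
        filter_upwards [ae_restrict_mem measurableSet_Ioo] with t ht using hpt t ht
    _ ≤ liminf (fun n => ∫⁻ t in Ioo (0:ℝ) B, ENNReal.ofReal (a n t)) atTop :=
        lintegral_liminf_le' hmeas
    _ ≤ ENNReal.ofReal ((ω 0 - ω B) * B) := by
        calc liminf (fun n => ∫⁻ t in Ioo (0:ℝ) B, ENNReal.ofReal (a n t)) atTop
            ≤ liminf (fun _ : ℕ => ENNReal.ofReal ((ω 0 - ω B) * B)) atTop :=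
              liminf_le_liminf hper
          _ = ENNReal.ofReal ((ω 0 - ω B) * B) := liminf_const _


lemma theta_inj (θ θ' : ℝ)
    (h : Complex.exp ((θ : ℂ) * Complex.I) = Complex.exp ((θ' : ℂ) * Complex.I))
    (h1 : θ ∈ Set.Ioo 0 (2*π)) (h2 : θ' ∈ Set.Ioo 0 (2*π)) : θ = θ' := by
  rw [Complex.exp_eq_exp_iff_exists_int] at h
  obtain ⟨n, hn⟩ := h
  have him := congrArg Complex.im hn
  simp [Complex.add_im, Complex.mul_im] at him
  have hn0 : n = 0 := by
    rcases lt_trichotomy n 0 with h | h | h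
    · have h1' : (n:ℝ) ≤ -1 := by exact_mod_cast (by omega : n ≤ -1)
      nlinarith [h1.1, h1.2, h2.1, h2.2, pi_pos]
    · exact h
    · have h1' : (1:ℝ) ≤ (n:ℝ) := by exact_mod_cast h
      nlinarith [h1.1, h1.2, h2.1, h2.2, pi_pos]
  rw [hn0] at him
  simpa using him

lemma esymm_polar (p : ℝ × ℝ) :
    Complex.measurableEquivRealProd.symm (polarCoord.symm p)
      = (p.1 : ℂ) * Complex.exp ((p.2 : ℂ) * Complex.I) := by
  apply Complex.ext <;>
    simp [Complex.measurableEquivRealProd_symm_apply, polarCoord_symm_apply,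
      Complex.exp_ofReal_mul_I_re, Complex.exp_ofReal_mul_I_im]

lemma norm_polar (r θ : ℝ) (hr : 0 < r) :
    ‖(r : ℂ) * Complex.exp ((θ : ℂ) * Complex.I)‖ = r := by
  simp [norm_mul, Complex.norm_exp_ofReal_mul_I, abs_of_pos hr]

lemma sq_image (R : ℝ) (hR : 0 < R) :
    (fun r : ℝ => r ^ 2) '' Set.Ioo 0 R = Set.Ioo 0 (R^2) := by
  ext t
  constructor
  · rintro ⟨r, ⟨hr0, hrR⟩, rfl⟩
    refine ⟨by positivity, ?_⟩
    show r^2 < R^2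
    nlinarith
  · rintro ⟨ht0, htR⟩
    exact ⟨Real.sqrt t, ⟨Real.sqrt_pos.2 ht0, (Real.sqrt_lt' hR).2 htR⟩, Real.sq_sqrt ht0.le⟩

-- injectivity of polar map on (0,R) × (0,2π)
lemma polar_injOn (R : ℝ) :
    Set.InjOn (⇑polarCoord.symm) (Set.Ioo 0 R ×ˢ Set.Ioo 0 (2*π)) := by
  rintro ⟨r, θ⟩ hp ⟨r', θ'⟩ hp' hpe
  simp only [Set.mem_prod, Set.mem_Ioo] at hp hp'
  have hz : (r : ℂ) * Complex.exp ((θ : ℂ) * Complex.I)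
      = (r' : ℂ) * Complex.exp ((θ' : ℂ) * Complex.I) := by
    rw [← esymm_polar (r, θ), ← esymm_polar (r', θ'), hpe]
  have hrr : r = r' := by
    have h1 := norm_polar r θ hp.1.1
    have h2 := norm_polar r' θ' hp'.1.1
    rw [← h1, ← h2, hz]
  have hee : Complex.exp ((θ : ℂ) * Complex.I) = Complex.exp ((θ' : ℂ) * Complex.I) := by
    subst hrr
    exact mul_left_cancel₀ (by exact_mod_cast hp.1.1.ne' : (r:ℂ) ≠ 0) hz
  have := theta_inj θ θ' hee hp.2 hp'.2
  simp [hrr, this]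

-- the image of the polar map covers the ball up to a null set
lemma polar_image (R : ℝ) (hR : 0 < R) :
    (⇑Complex.measurableEquivRealProd.symm ⁻¹' (Metric.ball (0:ℂ) R))
      =ᵐ[volume] (⇑polarCoord.symm '' (Set.Ioo 0 R ×ˢ Set.Ioo 0 (2*π))) := by
  set s := Set.Ioo (0:ℝ) R ×ˢ Set.Ioo 0 (2*π) with hs
  set U := (⇑Complex.measurableEquivRealProd.symm ⁻¹' (Metric.ball (0:ℂ) R)) with hU
  have haxis : volume {p : ℝ × ℝ | p.2 = 0} = 0 := by
    have hker : {p : ℝ × ℝ | p.2 = 0}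
        ⊆ (LinearMap.ker (LinearMap.snd ℝ ℝ ℝ) : Set (ℝ × ℝ)) := by
      intro p hp
      simpa [LinearMap.mem_ker] using hp
    refine measure_mono_null hker (Measure.addHaar_submodule _ _ ?_)
    rw [Ne, LinearMap.ker_eq_top]
    intro h
    have : (LinearMap.snd ℝ ℝ ℝ) (0, 1) = (0 : ℝ × ℝ →ₗ[ℝ] ℝ) (0, 1) := by rw [h]
    simp at this
  rw [Filter.eventuallyEq_set, ae_iff]
  have h1 : ∀ p : ℝ × ℝ, p.2 ≠ 0 → (p ∈ U ↔ p ∈ ⇑polarCoord.symm '' s) := by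
    intro p hp2
    constructor
    · intro hpU
      set z := Complex.measurableEquivRealProd.symm p with hz
      have hzim : z.im = p.2 := by
        rw [hz, Complex.measurableEquivRealProd_symm_apply]
      have hzne : z ≠ 0 := by
        intro h; rw [h] at hzim; exact hp2 (by simpa using hzim.symm)
      have habs : 0 < ‖z‖ := norm_pos_iff.mpr hzne
      have hballz : ‖z‖ < R := by
        rw [hU, Set.mem_preimage, mem_ball_zero_iff] at hpU
        exact hpU
      have hargne : z.arg ≠ 0 := by
        intro h
        rw [Complex.arg_eq_zero_iff] at h
        exact hp2 (by rw [← hzim]; exact h.2)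
      set θ : ℝ := if 0 < z.arg then z.arg else z.arg + 2*π with hθ
      have hθmem : θ ∈ Set.Ioo 0 (2*π) := by
        have ha1 := Complex.neg_pi_lt_arg z
        have ha2 := Complex.arg_le_pi z
        have hπ := pi_pos
        rw [hθ]
        split_ifs with hpos
        · constructor <;> [exact hpos; linarith]
        · push_neg at hpos
          have : z.arg < 0 := lt_of_le_of_ne hpos hargne
          constructor <;> linarith
      have hexpθ : Complex.exp ((θ:ℂ) * Complex.I) = Complex.exp ((z.arg:ℂ) * Complex.I) := by
        rw [hθ]
        split_ifs with hpos
        · rfl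
        · push_cast
          rw [add_mul, Complex.exp_add, Complex.exp_two_pi_mul_I, mul_one]
      refine ⟨(‖z‖, θ), ⟨⟨habs, hballz⟩, hθmem⟩, ?_⟩
      apply Complex.measurableEquivRealProd.symm.injective
      rw [esymm_polar (‖z‖, θ)]
      show (‖z‖ : ℂ) * Complex.exp ((θ:ℂ) * Complex.I) = z
      rw [hexpθ, Complex.norm_mul_exp_arg_mul_I]
    · rintro ⟨⟨r, θ⟩, hmem, rfl⟩
      simp only [hs, Set.mem_prod, Set.mem_Ioo] at hmem
      have : ‖Complex.measurableEquivRealProd.symm (polarCoord.symm (r, θ))‖ = r := by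
        rw [esymm_polar (r, θ)]
        exact norm_polar r θ hmem.1.1
      simp only [hU, Set.mem_preimage, mem_ball_zero_iff]
      rw [this]
      exact hmem.1.2
  refine measure_mono_null ?_ haxis
  intro p hp
  simp only [Set.mem_setOf_eq] at hp ⊢
  by_contra hp2
  exact hp (h1 p hp2)

/-- For `ω` differentiable, positive and non-increasing on `[0,R²]` and `g` analytic
in `𝔻_R`, `D_q(R,g;ω)^q ≤ (1/2)(ω(0) − ω(R²)) R² M_q(R,g)^q`, where
`M_q(R,g)^q = lim_{r→R⁻} M_q(r,g)^q = sup_{0<r<R} M_q(r,g)^q`. -/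
theorem Dq_le_of_Mq
    (R q : ℝ) (hR : 0 < R) (hq : 1 ≤ q)
    (ω : ℝ → ℝ)
    (hωdiff : DifferentiableOn ℝ ω (Set.Icc 0 (R ^ 2)))
    (hωpos : ∀ x ∈ Set.Icc (0 : ℝ) (R ^ 2), 0 < ω x)
    (hωdec : AntitoneOn ω (Set.Icc 0 (R ^ 2)))
    (hωcont : Filter.Tendsto ω (nhdsWithin (R ^ 2) (Set.Iio (R ^ 2))) (nhds (ω (R ^ 2))))
    (g : ℂ → ℂ) (hg : DifferentiableOn ℂ g (Metric.ball 0 R)) :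
    (∫⁻ z in Metric.ball (0 : ℂ) R,
        (‖z‖₊ : ENNReal) ^ 2 * (‖g z‖₊ : ENNReal) ^ q *
          ENNReal.ofReal (-(deriv ω (‖z‖ ^ 2))))
      ≤ ENNReal.ofReal (1 / 2 * (ω 0 - ω (R ^ 2)) * R ^ 2) *
        ⨆ r ∈ Set.Ioo (0 : ℝ) R,
          ∫⁻ θ in Set.Ioo (0 : ℝ) (2 * Real.pi),
            (‖g ((r : ℂ) * Complex.exp ((θ : ℂ) * Complex.I))‖₊ : ENNReal) ^ q := by
  have hR2 : (0:ℝ) < R ^ 2 := by positivity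
  set F : ℂ → ℝ≥0∞ := fun z =>
    (‖z‖₊ : ℝ≥0∞) ^ 2 * (‖g z‖₊ : ℝ≥0∞) ^ q *
      ENNReal.ofReal (-(deriv ω (‖z‖ ^ 2))) with hF
  set S : ℝ≥0∞ := ⨆ r ∈ Set.Ioo (0 : ℝ) R,
      ∫⁻ θ in Set.Ioo (0 : ℝ) (2 * Real.pi),
        (‖g ((r : ℂ) * Complex.exp ((θ : ℂ) * Complex.I))‖₊ : ℝ≥0∞) ^ q with hSdef
  set s : Set (ℝ × ℝ) := Set.Ioo (0:ℝ) R ×ˢ Set.Ioo 0 (2*π) with hs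
  have hsm : MeasurableSet s := measurableSet_Ioo.prod measurableSet_Ioo
  set C : ℝ → ℝ≥0∞ := fun r =>
    ENNReal.ofReal r * ENNReal.ofReal r ^ 2 * ENNReal.ofReal (-(deriv ω (r ^ 2))) with hC
  have hdm : Measurable (deriv ω) := measurable_deriv ω
  have hCm : Measurable C := by
    rw [hC]
    apply Measurable.fun_mul
    · apply Measurable.fun_mul
      · exact ENNReal.measurable_ofReal.comp measurable_id
      · exact (ENNReal.measurable_ofReal.comp measurable_id).pow_const 2
    · exact ENNReal.measurable_ofReal.comp ((hdm.comp (measurable_id.pow_const 2)).neg)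
  have hCfin : ∀ r, C r ≠ ⊤ := by
    intro r
    exact ENNReal.mul_ne_top (ENNReal.mul_ne_top ENNReal.ofReal_ne_top
      (ENNReal.pow_ne_top ENNReal.ofReal_ne_top)) ENNReal.ofReal_ne_top
  -- derivative of polar map
  set Bd : ℝ × ℝ → ℝ × ℝ →L[ℝ] ℝ × ℝ := fun p =>
    LinearMap.toContinuousLinearMap (Matrix.toLin (Module.Basis.finTwoProd ℝ) (Module.Basis.finTwoProd ℝ)
      !![Real.cos p.2, -p.1 * Real.sin p.2; Real.sin p.2, p.1 * Real.cos p.2]) with hBd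
  have hBdet : ∀ p, (Bd p).det = p.1 := by
    intro p
    conv_rhs => rw [← one_mul p.1, ← cos_sq_add_sin_sq p.2]
    simp only [hBd, neg_mul, LinearMap.det_toContinuousLinearMap, LinearMap.det_toLin,
      Matrix.det_fin_two_of, sub_neg_eq_add]
    ring
  have hder : ∀ p ∈ s, HasFDerivWithinAt (⇑polarCoord.symm) (Bd p) s p :=
    fun p _ => by rw [hBd]; exact (hasFDerivAt_polarCoord_symm p).hasFDerivWithinAt
  -- change of variables to polar coordinates
  have step1 : (∫⁻ z in Metric.ball (0:ℂ) R, F z)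
      = ∫⁻ p in s, ENNReal.ofReal |p.1|
          * F (Complex.measurableEquivRealProd.symm (polarCoord.symm p)) := by
    rw [← (Complex.volume_preserving_equiv_real_prod.symm
        Complex.measurableEquivRealProd).setLIntegral_comp_preimage_emb
        Complex.measurableEquivRealProd.symm.measurableEmbedding F (Metric.ball 0 R),
      setLIntegral_congr (polar_image R hR),
      lintegral_image_eq_lintegral_abs_det_fderiv_mul volume hsm hder (polar_injOn R)
        (fun p => F (Complex.measurableEquivRealProd.symm p))]
    simp_rw [hBdet]
  -- pointwise simplification on s
  have step2 : (∫⁻ p in s, ENNReal.ofReal |p.1|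
          * F (Complex.measurableEquivRealProd.symm (polarCoord.symm p)))
      = ∫⁻ p in s, C p.1
          * (‖g ((p.1 : ℂ) * Complex.exp ((p.2 : ℂ) * Complex.I))‖₊ : ℝ≥0∞) ^ q := by
    apply setLIntegral_congr_fun hsm
    intro p hp
    have hp1 : 0 < p.1 := by
      rw [hs] at hp
      exact hp.1.1
    dsimp only
    rw [esymm_polar p]
    have hn : ‖(p.1 : ℂ) * Complex.exp ((p.2 : ℂ) * Complex.I)‖ = p.1 :=
      norm_polar p.1 p.2 hp1
    have hnn : (‖(p.1 : ℂ) * Complex.exp ((p.2 : ℂ) * Complex.I)‖₊ : ℝ≥0∞)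
        = ENNReal.ofReal p.1 := by
      rw [← enorm_eq_nnnorm, ← ofReal_norm, hn]
    rw [hF, hC]
    simp only [hn, hnn, abs_of_pos hp1]
    ring
  -- Fubini
  have hmeq : ((volume : Measure ℝ).restrict (Set.Ioo 0 R)).prod
        ((volume : Measure ℝ).restrict (Set.Ioo 0 (2*π)))
      = (volume : Measure (ℝ×ℝ)).restrict s := by
    rw [hs, Measure.prod_restrict, ← Measure.volume_eq_prod]
  have hT : Continuous (fun p : ℝ × ℝ => (p.1 : ℂ) * Complex.exp ((p.2 : ℂ) * Complex.I)) := by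
    fun_prop
  have hmaps : Set.MapsTo (fun p : ℝ × ℝ => (p.1 : ℂ) * Complex.exp ((p.2 : ℂ) * Complex.I))
      s (Metric.ball (0:ℂ) R) := by
    intro p hp
    rw [hs] at hp
    rw [mem_ball_zero_iff, norm_polar p.1 p.2 hp.1.1]
    exact hp.1.2
  have hgc : ContinuousOn (fun z => (‖g z‖₊ : ℝ≥0∞) ^ q) (Metric.ball (0:ℂ) R) :=
    ENNReal.continuous_rpow_const.comp_continuousOn
      ((ENNReal.continuous_coe.comp continuous_nnnorm).comp_continuousOn hg.continuousOn)
  have hA : AEMeasurable (fun p : ℝ × ℝ => C p.1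
      * (‖g ((p.1 : ℂ) * Complex.exp ((p.2 : ℂ) * Complex.I))‖₊ : ℝ≥0∞) ^ q)
      ((volume : Measure (ℝ×ℝ)).restrict s) := by
    apply AEMeasurable.mul
    · exact (hCm.comp measurable_fst).aemeasurable
    · exact (hgc.comp hT.continuousOn hmaps).aemeasurable hsm
  have step3 : (∫⁻ p in s, C p.1
        * (‖g ((p.1 : ℂ) * Complex.exp ((p.2 : ℂ) * Complex.I))‖₊ : ℝ≥0∞) ^ q)
      = ∫⁻ r in Set.Ioo (0:ℝ) R, ∫⁻ θ in Set.Ioo (0:ℝ) (2*π),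
          C r * (‖g ((r : ℂ) * Complex.exp ((θ : ℂ) * Complex.I))‖₊ : ℝ≥0∞) ^ q := by
    rw [← hmeq]
    exact lintegral_prod _ (by rw [hmeq]; exact hA)
  -- bound the inner integral by S
  have step4 : (∫⁻ r in Set.Ioo (0:ℝ) R, ∫⁻ θ in Set.Ioo (0:ℝ) (2*π),
          C r * (‖g ((r : ℂ) * Complex.exp ((θ : ℂ) * Complex.I))‖₊ : ℝ≥0∞) ^ q)
      ≤ ∫⁻ r in Set.Ioo (0:ℝ) R, S * C r := by
    apply lintegral_mono_ae
    filter_upwards [ae_restrict_mem measurableSet_Ioo] with r hr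
    rw [lintegral_const_mul' _ _ (hCfin r), mul_comm (C r)]
    apply mul_le_mul_left
    rw [hSdef]
    exact le_biSup (fun r : ℝ => ∫⁻ θ in Set.Ioo (0:ℝ) (2*π),
      (‖g ((r : ℂ) * Complex.exp ((θ : ℂ) * Complex.I))‖₊ : ℝ≥0∞) ^ q) hr
  have step5 : (∫⁻ r in Set.Ioo (0:ℝ) R, S * C r) = S * ∫⁻ r in Set.Ioo (0:ℝ) R, C r :=
    lintegral_const_mul S hCm
  -- change of variables t = r², and the main estimate on ω
  set h : ℝ → ℝ≥0∞ := fun t =>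
    ENNReal.ofReal (1/2) * (ENNReal.ofReal t * ENNReal.ofReal (-(deriv ω t))) with hh
  have hsqinj : Set.InjOn (fun r : ℝ => r ^ 2) (Set.Ioo 0 R) := by
    intro a ha b hb hab
    simp only at hab
    nlinarith [ha.1, hb.1]
  have hsqder : ∀ x ∈ Set.Ioo (0:ℝ) R, HasFDerivWithinAt (fun r : ℝ => r ^ 2)
      (ContinuousLinearMap.smulRight (1 : ℝ →L[ℝ] ℝ) (2*x)) (Set.Ioo 0 R) x := by
    intro x _
    exact ((by simpa using (hasDerivAt_pow 2 x) :
      HasDerivAt (fun r : ℝ => r ^ 2) (2*x) x)).hasDerivWithinAt.hasFDerivWithinAt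
  have hcov1 : (∫⁻ t in Set.Ioo (0:ℝ) (R^2), h t)
      = ∫⁻ r in Set.Ioo (0:ℝ) R, ENNReal.ofReal |2*r| * h (r^2) := by
    rw [← sq_image R hR]
    simpa only [ContinuousLinearMap.smulRight_one_eq_toSpanSingleton, ContinuousLinearMap.det_toSpanSingleton] using
      lintegral_image_eq_lintegral_abs_det_fderiv_mul volume measurableSet_Ioo hsqder hsqinj h
  have step6 : (∫⁻ r in Set.Ioo (0:ℝ) R, C r) = ∫⁻ t in Set.Ioo (0:ℝ) (R^2), h t := by
    rw [hcov1]
    apply setLIntegral_congr_fun measurableSet_Ioo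
    intro r hr
    have hr1 : 0 < r := hr.1
    rw [hC, hh]
    dsimp only
    rw [abs_of_pos (by linarith : (0:ℝ) < 2*r), ← ENNReal.ofReal_pow hr1.le,
      ← ENNReal.ofReal_mul (by positivity : (0:ℝ) ≤ r)]
    rw [show ENNReal.ofReal (2*r) * (ENNReal.ofReal (1/2)
        * (ENNReal.ofReal (r^2) * ENNReal.ofReal (-(deriv ω (r^2)))))
      = (ENNReal.ofReal (2*r) * ENNReal.ofReal (1/2) * ENNReal.ofReal (r^2))
        * ENNReal.ofReal (-(deriv ω (r^2))) from by ring]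
    rw [← ENNReal.ofReal_mul (by positivity : (0:ℝ) ≤ 2*r),
      ← ENNReal.ofReal_mul (by positivity : (0:ℝ) ≤ 2*r*(1/2))]
    congr 2
    ring
  have step7 : (∫⁻ t in Set.Ioo (0:ℝ) (R^2), h t)
      ≤ ENNReal.ofReal (1 / 2 * (ω 0 - ω (R ^ 2)) * R ^ 2) := by
    rw [hh, lintegral_const_mul' _ _ ENNReal.ofReal_ne_top]
    calc ENNReal.ofReal (1/2) * ∫⁻ t in Set.Ioo (0:ℝ) (R^2),
          ENNReal.ofReal t * ENNReal.ofReal (-(deriv ω t))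
        ≤ ENNReal.ofReal (1/2) * ENNReal.ofReal ((ω 0 - ω (R^2)) * R^2) :=
          mul_le_mul_right (lintegral_mul_neg_deriv_le (R^2) hR2 ω hωdiff hωdec) _
      _ = ENNReal.ofReal (1 / 2 * (ω 0 - ω (R ^ 2)) * R ^ 2) := by
          rw [← ENNReal.ofReal_mul (by norm_num : (0:ℝ) ≤ 1/2)]
          ring_nf
  calc (∫⁻ z in Metric.ball (0 : ℂ) R, F z)
      = ∫⁻ p in s, ENNReal.ofReal |p.1|
          * F (Complex.measurableEquivRealProd.symm (polarCoord.symm p)) := step1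
    _ = ∫⁻ p in s, C p.1
          * (‖g ((p.1 : ℂ) * Complex.exp ((p.2 : ℂ) * Complex.I))‖₊ : ℝ≥0∞) ^ q := step2
    _ = ∫⁻ r in Set.Ioo (0:ℝ) R, ∫⁻ θ in Set.Ioo (0:ℝ) (2*π),
          C r * (‖g ((r : ℂ) * Complex.exp ((θ : ℂ) * Complex.I))‖₊ : ℝ≥0∞) ^ q := step3
    _ ≤ ∫⁻ r in Set.Ioo (0:ℝ) R, S * C r := step4
    _ = S * ∫⁻ r in Set.Ioo (0:ℝ) R, C r := step5
    _ = S * ∫⁻ t in Set.Ioo (0:ℝ) (R^2), h t := by rw [step6]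
    _ ≤ S * ENNReal.ofReal (1 / 2 * (ω 0 - ω (R ^ 2)) * R ^ 2) := mul_le_mul_right step7 _
    _ = ENNReal.ofReal (1 / 2 * (ω 0 - ω (R ^ 2)) * R ^ 2) * S := mul_comm _ _
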